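/- If the sequent φ ⊢ χ is valid on a frame F (i.e., at every pointed model on F, truth of φ implies truth of χ), then the contraposed sequent ¬χ ⊢ ¬φ is also valid on F. -/
import Mathlib


/-- Formulas of the language with ¬, ∧, ∨, □, ■, 𝐈 and ▲. -/
inductive Form : Type
  | var : ℕ → Form
  | neg : Form → Form
  | conj : Form → Form → Form
  | disj : Form → Form → Form
  | box : Form → Form
  | bbox : Form → Form
  | ign : Form → Form
  | tri : Form → Form

/-- A Kripke model for Belnap–Dunn modal logic. -/
structure Model (W : Type) where
  R : W → W → Prop
  vp : ℕ → W → Prop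
  vn : ℕ → W → Prop

mutual
  /-- support of truth -/
  def tr {W : Type} (M : Model W) : Form → W → Prop
    | .var n, w => M.vp n w
    | .neg φ, w => fa M φ w
    | .conj φ ψ, w => tr M φ w ∧ tr M ψ w
    | .disj φ ψ, w => tr M φ w ∨ tr M ψ w
    | .box φ, w => ∀ w', M.R w w' → tr M φ w'
    | .bbox φ, w => (∀ w', M.R w w' → tr M φ w') ∧
        ∀ w₁ w₂, M.R w w₁ → M.R w w₂ → fa M φ w₁ → fa M φ w₂
    | .ign φ, w => tr M φ w ∧ (∀ w', M.R w w' → w' ≠ w → fa M φ w') ∧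
        ∀ w₁ w₂, M.R w w₁ → w₁ ≠ w → M.R w w₂ → w₂ ≠ w → tr M φ w₁ → tr M φ w₂
    | .tri φ, w => (∀ w₁ w₂, M.R w w₁ → M.R w w₂ →
          (tr M φ w₁ → tr M φ w₂) ∧ (fa M φ w₁ → fa M φ w₂)) ∧
        ∀ w', M.R w w' → tr M φ w' ∨ fa M φ w'
  /-- support of falsity -/
  def fa {W : Type} (M : Model W) : Form → W → Prop
    | .var n, w => M.vn n w
    | .neg φ, w => tr M φ w
    | .conj φ ψ, w => fa M φ w ∨ fa M ψ w
    | .disj φ ψ, w => fa M φ w ∧ fa M ψ w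
    | .box φ, w => ∃ w', M.R w w' ∧ fa M φ w'
    | .bbox φ, w => (∃ w', M.R w w' ∧ fa M φ w') ∨
        ∃ w₁ w₂, M.R w w₁ ∧ M.R w w₂ ∧ tr M φ w₁ ∧ ¬ tr M φ w₂
    | .ign φ, w => fa M φ w ∨ (∃ w', M.R w w' ∧ w' ≠ w ∧ tr M φ w') ∨
        ∃ w₁ w₂, (M.R w w₁ ∧ w₁ ≠ w) ∧ (M.R w w₂ ∧ w₂ ≠ w) ∧ ¬ fa M φ w₁ ∧ fa M φ w₂
    | .tri φ, w => (∃ w₁ w₂, M.R w w₁ ∧ M.R w w₂ ∧ tr M φ w₁ ∧ ¬ tr M φ w₂) ∨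
        (∃ w₁ w₂, M.R w w₁ ∧ M.R w w₂ ∧ fa M φ w₁ ∧ ¬ fa M φ w₂) ∨
        (∃ w₁ w₂, M.R w w₁ ∧ M.R w w₂ ∧ tr M φ w₁ ∧ fa M φ w₂)
end

/-- φ contains an occurrence of □ -/
def hasBox : Form → Prop
  | .var _ => False
  | .neg φ => hasBox φ
  | .conj φ ψ => hasBox φ ∨ hasBox ψ
  | .disj φ ψ => hasBox φ ∨ hasBox ψ
  | .box _ => True
  | .bbox φ => hasBox φ
  | .ign φ => hasBox φ
  | .tri φ => hasBox φ

/-- φ contains an occurrence of ■ -/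
def hasBBox : Form → Prop
  | .var _ => False
  | .neg φ => hasBBox φ
  | .conj φ ψ => hasBBox φ ∨ hasBBox ψ
  | .disj φ ψ => hasBBox φ ∨ hasBBox ψ
  | .box φ => hasBBox φ
  | .bbox _ => True
  | .ign φ => hasBBox φ
  | .tri φ => hasBBox φ

/-- φ contains an occurrence of 𝐈 -/
def hasIgn : Form → Prop
  | .var _ => False
  | .neg φ => hasIgn φ
  | .conj φ ψ => hasIgn φ ∨ hasIgn ψ
  | .disj φ ψ => hasIgn φ ∨ hasIgn ψ
  | .box φ => hasIgn φ
  | .bbox φ => hasIgn φ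
  | .ign _ => True
  | .tri φ => hasIgn φ

/-- φ contains an occurrence of ▲ -/
def hasTri : Form → Prop
  | .var _ => False
  | .neg φ => hasTri φ
  | .conj φ ψ => hasTri φ ∨ hasTri ψ
  | .disj φ ψ => hasTri φ ∨ hasTri ψ
  | .box φ => hasTri φ
  | .bbox φ => hasTri φ
  | .ign φ => hasTri φ
  | .tri _ => True

/-- validity of the sequent φ ⊢ χ on the frame (W,R) -/
def validOn {W : Type} (R : W → W → Prop) (φ χ : Form) : Prop :=
  ∀ (vp vn : ℕ → W → Prop) (w : W), tr ⟨R, vp, vn⟩ φ w → tr ⟨R, vp, vn⟩ χ w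

/-- ♦φ := ¬■¬φ -/
def dia (φ : Form) : Form := .neg (.bbox (.neg φ))

/-- dual model: swaps gap and glut -/
def dual {W : Type} (M : Model W) : Model W :=
  ⟨M.R, fun n w => ¬ M.vn n w, fun n w => ¬ M.vp n w⟩

set_option maxHeartbeats 1600000 in
lemma dual_lemma {W : Type} (M : Model W) (φ : Form) (hb : ¬ hasBox φ) (ht : ¬ hasTri φ) :
    ∀ w, (tr (dual M) φ w ↔ ¬ fa M φ w) ∧ (fa (dual M) φ w ↔ ¬ tr M φ w) := by
  induction φ with
  | var n => intro w; simp [tr, fa, dual]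
  | neg φ ih =>
      simp only [hasBox] at hb; simp only [hasTri] at ht
      intro w; have := ih hb ht w
      simp only [tr, fa]; exact ⟨this.2, this.1⟩
  | conj φ ψ ihφ ihψ =>
      simp only [hasBox] at hb; simp only [hasTri] at ht
      push_neg at hb ht
      intro w
      have h1 := ihφ hb.1 ht.1 w; have h2 := ihψ hb.2 ht.2 w
      simp only [tr, fa, h1.1, h1.2, h2.1, h2.2]; tauto
  | disj φ ψ ihφ ihψ =>
      simp only [hasBox] at hb; simp only [hasTri] at ht
      push_neg at hb ht
      intro w
      have h1 := ihφ hb.1 ht.1 w; have h2 := ihψ hb.2 ht.2 w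
      simp only [tr, fa, h1.1, h1.2, h2.1, h2.2]; tauto
  | box φ ih => exact absurd trivial hb
  | bbox φ ih =>
      simp only [hasBox] at hb; simp only [hasTri] at ht
      have ih1 : ∀ w, tr (dual M) φ w ↔ ¬ fa M φ w := fun w => (ih hb ht w).1
      have ih2 : ∀ w, fa (dual M) φ w ↔ ¬ tr M φ w := fun w => (ih hb ht w).2
      intro w
      have hR : (dual M).R = M.R := rfl
      simp only [tr, fa, ih1, ih2, hR]
      push_neg
      constructor
      · constructor
        · rintro ⟨a, b⟩
          exact ⟨a, fun w₁ w₂ h₁ h₂ t₁ => by_contra fun nt₂ => b w₂ w₁ h₂ h₁ nt₂ t₁⟩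
        · rintro ⟨a, b⟩
          exact ⟨a, fun w₁ w₂ h₁ h₂ nt₁ t₂ => nt₁ (b w₂ w₁ h₂ h₁ t₂)⟩
      · constructor
        · rintro (⟨w', hw', hnt⟩ | ⟨w₁, w₂, h₁, h₂, nf₁, f₂⟩)
          · exact fun htr => absurd (htr w' hw') hnt
          · exact fun _ => ⟨w₂, w₁, h₂, h₁, f₂, nf₁⟩
        · intro H
          by_cases hall : ∀ w', M.R w w' → tr M φ w'
          · obtain ⟨w₁, w₂, h₁, h₂, f₁, nf₂⟩ := H hall
            exact Or.inr ⟨w₂, w₁, h₂, h₁, nf₂, f₁⟩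
          · push_neg at hall
            obtain ⟨w', hw', hnt⟩ := hall
            exact Or.inl ⟨w', hw', hnt⟩
  | ign φ ih =>
      simp only [hasBox] at hb; simp only [hasTri] at ht
      have ih1 : ∀ w, tr (dual M) φ w ↔ ¬ fa M φ w := fun w => (ih hb ht w).1
      have ih2 : ∀ w, fa (dual M) φ w ↔ ¬ tr M φ w := fun w => (ih hb ht w).2
      intro w
      have hR : (dual M).R = M.R := rfl
      simp only [tr, fa, ih1, ih2, hR]
      push_neg
      constructor
      · constructor
        · rintro ⟨a, b, c⟩
          exact ⟨a, b, fun w₁ w₂ p q => c w₁ w₂ p.1 p.2 q.1 q.2⟩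
        · rintro ⟨a, b, c⟩
          exact ⟨a, b, fun w₁ w₂ h₁ n₁ h₂ n₂ => c w₁ w₂ ⟨h₁, n₁⟩ ⟨h₂, n₂⟩⟩
      · constructor
        · rintro (hnt | ⟨w', hw', hne, hnf⟩ | ⟨w₁, w₂, ⟨h₁, n₁⟩, ⟨h₂, n₂⟩, t₁, nt₂⟩)
          · exact fun t => absurd t hnt
          · exact fun _ hall => absurd (hall w' hw' hne) hnf
          · exact fun _ _ => ⟨w₁, w₂, h₁, n₁, h₂, n₂, t₁, nt₂⟩
        · intro H
          by_cases h0 : tr M φ w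
          · by_cases hall : ∀ w', M.R w w' → w' ≠ w → fa M φ w'
            · obtain ⟨w₁, w₂, h₁, n₁, h₂, n₂, t₁, nt₂⟩ := H h0 hall
              exact Or.inr (Or.inr ⟨w₁, w₂, ⟨h₁, n₁⟩, ⟨h₂, n₂⟩, t₁, nt₂⟩)
            · push_neg at hall
              obtain ⟨w', hw', hne, hnf⟩ := hall
              exact Or.inr (Or.inl ⟨w', hw', hne, hnf⟩)
          · exact Or.inl h0
  | tri φ ih => exact absurd trivial ht

/-- contraposition is sound on every frame (language {¬,∧,∨,■,𝐈}). -/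
theorem contraposition_valid {W : Type} [Nonempty W] (R : W → W → Prop) (φ χ : Form)
    (h1 : ¬ hasBox φ) (h2 : ¬ hasTri φ) (h3 : ¬ hasBox χ) (h4 : ¬ hasTri χ)
    (h : validOn R φ χ) : validOn R (.neg χ) (.neg φ) := by
  intro vp vn w hw
  have hχ : fa ⟨R, vp, vn⟩ χ w := hw
  show fa ⟨R, vp, vn⟩ φ w
  by_contra hφ
  have htr : tr (dual ⟨R, vp, vn⟩) φ w := (dual_lemma ⟨R, vp, vn⟩ φ h1 h2 w).1.mpr hφ
  have h' : tr (dual ⟨R, vp, vn⟩) χ w :=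
    h (fun n w => ¬ vn n w) (fun n w => ¬ vp n w) w htr
  exact (dual_lemma ⟨R, vp, vn⟩ χ h3 h4 w).1.mp h' hχ
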